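/- For every natural number m and every real N > 0, the integral over the complex plane (1/(π·N·√((m+1)!·m!))) · ∫_ℂ ‖z‖^{2m} · (m + 1 − ‖z‖²) · e^{−((N+1)/N)·‖z‖²} dz (with respect to Lebesgue measure on ℂ) equals √(m+1) · (N/(N+1))^m / (N+1)². -/

import Mathlib

open MeasureTheory


theorem gauss_moment (k : ℕ) {c : ℝ} (hc : 0 < c) :
    ∫ z : ℂ, ‖z‖ ^ (2*k) * Real.exp (-c * ‖z‖ ^ 2)
      = Real.pi * k.factorial / c ^ (k+1) := by
  rw [MeasureTheory.integral_fun_norm_addHaar (volume : Measure ℂ)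
    (fun r => r ^ (2*k) * Real.exp (-c * r^2))]
  have hdim : Module.finrank ℝ ℂ = 2 := Complex.finrank_real_complex
  rw [hdim]
  have hball : (volume (Metric.ball (0:ℂ) 1)).toReal = Real.pi := by
    rw [Complex.volume_ball]; simp
  rw [measureReal_def, hball]
  have key : ∫ y in Set.Ioi (0:ℝ), y ^ (2-1) • (y ^ (2*k) * Real.exp (-c * y^2))
      = (k.factorial : ℝ) / (2 * c ^ (k+1)) := by
    have h := integral_rpow_mul_exp_neg_mul_rpow (p := 2) (q := ((2*k+1 : ℕ):ℝ))
      (by norm_num) (by have : (0:ℝ) ≤ ((2*k+1:ℕ):ℝ) := Nat.cast_nonneg _; linarith) hc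
    have h2 : ∀ x ∈ Set.Ioi (0:ℝ), x ^ (2-1) • (x ^ (2*k) * Real.exp (-c * x^2))
        = x ^ ((2*k+1 : ℕ):ℝ) * Real.exp (-c * x ^ (2:ℝ)) := by
      intro x hx
      rw [Real.rpow_natCast, show (2:ℝ) = ((2:ℕ):ℝ) by norm_num, Real.rpow_natCast,
        smul_eq_mul]
      ring
    rw [setIntegral_congr_fun measurableSet_Ioi h2, h,
      show (-(((2*k+1 : ℕ):ℝ)+1)/2) = -(((k+1:ℕ):ℝ)) by push_cast; ring,
      show ((((2*k+1 : ℕ):ℝ))+1)/2 = (k:ℝ)+1 by push_cast; ring,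
      Real.rpow_neg hc.le, Real.rpow_natCast, Real.Gamma_nat_eq_factorial]
    field_simp
  rw [key, nsmul_eq_mul, smul_eq_mul]
  field_simp
  ring

theorem gauss_integrable (k : ℕ) {c : ℝ} (hc : 0 < c) :
    Integrable (fun z : ℂ => ‖z‖ ^ (2*k) * Real.exp (-c * ‖z‖ ^ 2)) := by
  have h2 : (0:ℝ) < c/2 := by linarith
  have base : Integrable (fun z : ℂ => Real.exp (-(c/2) * ‖z‖ ^ 2)) := by
    have h := GaussianFourier.integrable_cexp_neg_mul_sq_norm_add (V := ℂ)
      (b := ((c/2 : ℝ) : ℂ)) (by simpa using h2) 0 0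
    have := h.norm
    simpa [Complex.norm_exp, ← Complex.ofReal_pow] using this
  have hb : Integrable (fun z : ℂ => (k.factorial : ℝ) * (2/c)^k * Real.exp (-(c/2) * ‖z‖ ^ 2)) :=
    base.const_mul _
  refine hb.mono' ?_ (Filter.Eventually.of_forall fun z => ?_)
  · apply Measurable.aestronglyMeasurable; fun_prop
  · rw [Real.norm_eq_abs, abs_of_nonneg (by positivity)]
    set r := ‖z‖ ^ 2 with hr
    have hr0 : 0 ≤ r := by positivity
    have hpow : ((c/2) * r) ^ k / (k.factorial : ℝ) ≤ Real.exp ((c/2) * r) := by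
      have hs := Real.sum_le_exp_of_nonneg (x := (c/2)*r) (by positivity) (k+1)
      calc ((c/2) * r) ^ k / (k.factorial : ℝ)
          ≤ ∑ i ∈ Finset.range (k+1), ((c/2)*r) ^ i / i.factorial :=
            Finset.single_le_sum (f := fun i => ((c/2)*r)^i / (i.factorial : ℝ))
              (fun i _ => by positivity) (Finset.self_mem_range_succ k)
        _ ≤ Real.exp ((c/2) * r) := hs
    have h1 : ‖z‖ ^ (2*k) = r ^ k := by rw [hr, ← pow_mul, mul_comm]
    have h2' : Real.exp (-c * r) = Real.exp (-(c/2)*r) * Real.exp (-(c/2)*r) := by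
      rw [← Real.exp_add]; ring_nf
    have hkey : r ^ k * Real.exp (-(c/2)*r) ≤ (k.factorial : ℝ) * (2/c)^k := by
      have e1 : ((c/2)*r)^k ≤ Real.exp ((c/2)*r) * k.factorial :=
        (div_le_iff₀ (by positivity)).mp hpow
      calc r ^ k * Real.exp (-(c/2)*r)
          = (2/c)^k * ((c/2)*r)^k * Real.exp (-(c/2)*r) := by
            rw [show (2/c)^k * ((c/2)*r)^k = r^k from by
              rw [← mul_pow]; congr 1; field_simp]
        _ ≤ (2/c)^k * (Real.exp ((c/2)*r) * k.factorial) * Real.exp (-(c/2)*r) := by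
            exact mul_le_mul_of_nonneg_right
              (mul_le_mul_of_nonneg_left e1 (by positivity)) (Real.exp_nonneg _)
        _ = (k.factorial : ℝ) * (2/c)^k * (Real.exp ((c/2)*r) * Real.exp (-((c/2)*r))) := by
            ring_nf
        _ = (k.factorial : ℝ) * (2/c)^k := by
            rw [← Real.exp_add, show (c/2)*r + -((c/2)*r) = 0 by ring, Real.exp_zero, mul_one]
    rw [h1, h2']
    calc r ^ k * (Real.exp (-(c/2)*r) * Real.exp (-(c/2)*r))
        = (r ^ k * Real.exp (-(c/2)*r)) * Real.exp (-(c/2)*r) := by ring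
      _ ≤ ((k.factorial : ℝ) * (2/c)^k) * Real.exp (-(c/2)*r) :=
          mul_le_mul_of_nonneg_right hkey (Real.exp_nonneg _)
/-- for every m ∈ ℕ and N > 0,
(1/(πN·√((m+1)!·m!))) ∫_ℂ ‖z‖^{2m} (m + 1 − ‖z‖²) e^{−((N+1)/N)‖z‖²} dz
  = √(m+1) (N/(N+1))^m / (N+1)². -/
theorem gaussian_noise_tm (m : ℕ) (N : ℝ) (hN : 0 < N) :
    (1 / (Real.pi * N * Real.sqrt ((m + 1).factorial * m.factorial))) *
        ∫ z : ℂ, ‖z‖ ^ (2 * m) * ((m : ℝ) + 1 - ‖z‖ ^ 2) *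
          Real.exp (-((N + 1) / N) * ‖z‖ ^ 2) =
      Real.sqrt ((m : ℝ) + 1) * (N / (N + 1)) ^ m / (N + 1) ^ 2 := by
  have hN1 : (0:ℝ) < N + 1 := by linarith
  have hc : (0:ℝ) < (N + 1) / N := by positivity
  have hint : (∫ z : ℂ, ‖z‖ ^ (2 * m) * ((m : ℝ) + 1 - ‖z‖ ^ 2) *
          Real.exp (-((N + 1) / N) * ‖z‖ ^ 2))
      = ((m:ℝ)+1) * (∫ z : ℂ, ‖z‖ ^ (2*m) * Real.exp (-((N+1)/N) * ‖z‖ ^ 2))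
        - ∫ z : ℂ, ‖z‖ ^ (2*(m+1)) * Real.exp (-((N+1)/N) * ‖z‖ ^ 2) := by
    rw [← integral_const_mul, ← integral_sub
      ((gauss_integrable m hc).const_mul _) (gauss_integrable (m+1) hc)]
    congr 1; funext z; ring
  rw [hint, gauss_moment m hc, gauss_moment (m+1) hc]
  have hfac : (0:ℝ) < ((m + 1).factorial : ℝ) * m.factorial := by positivity
  have hA : (0:ℝ) < Real.sqrt ((m + 1).factorial * m.factorial) := Real.sqrt_pos.mpr hfac
  have hkey : Real.sqrt ((m:ℝ) + 1) = ((m+1).factorial : ℝ) /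
      Real.sqrt ((m + 1).factorial * m.factorial) := by
    rw [eq_div_iff hA.ne', ← Real.sqrt_mul (by positivity),
      show ((m:ℝ)+1) * (((m + 1).factorial : ℝ) * m.factorial)
        = ((m+1).factorial : ℝ)^2 from by push_cast [Nat.factorial_succ]; ring,
      Real.sqrt_sq (by positivity)]
  rw [hkey]
  have hπ := Real.pi_pos
  rw [div_pow, div_pow]
  push_cast [Nat.factorial_succ]
  field_simp
  rw [div_pow, mul_div_assoc', eq_div_iff (by positivity)]
  ring
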